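/- Fix α ∈ (0,1), let a be a scaling function, and let x ≥ 0. Then lim_{θ→∞} (a(θ)/θ) · log F_θ((θ/a(θ))x + β(α,θ)) = 0. -/

import Mathlib

open MeasureTheory Filter Set

/-- `c_α = α / Γ(1-α)`. -/
noncomputable def cAlpha (α : ℝ) : ℝ := α / Real.Gamma (1 - α)

/-- `β(α,θ) = log θ - (α+1) log log θ - log Γ(1-α)`. -/
noncomputable def betaShift (α θ : ℝ) : ℝ :=
  Real.log θ - (α + 1) * Real.log (Real.log θ) - Real.log (Real.Gamma (1 - α))

/-- The distribution function of the largest jump `V₁(T)`: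
`F_θ(s) = (1 + c_α s^{-α} ∫_1^∞ z^{-(1+α)} e^{-sz} dz)^{-θ/α}` for `s > 0`, and `0` for `s ≤ 0`. -/
noncomputable def Fdist (α θ s : ℝ) : ℝ :=
  if 0 < s then
    (1 + cAlpha α * s ^ (-α) *
        ∫ z in Set.Ioi (1:ℝ), z ^ (-(1 + α)) * Real.exp (-(s * z))) ^ (-(θ / α))
  else 0

/-- For `α ∈ (0,1)`, a scaling function `a` (`a(θ) → ∞`, `a(θ)/θ → 0`) and `x ≥ 0`,
`lim_{θ→∞} (a(θ)/θ) log F_θ((θ/a(θ)) x + β(α,θ)) = 0`. -/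
theorem mdp_upper_nonneg (α : ℝ) (hα : α ∈ Set.Ioo (0:ℝ) 1)
    (a : ℝ → ℝ) (hapos : ∀ θ > (0:ℝ), 0 < a θ)
    (ha : Filter.Tendsto a Filter.atTop Filter.atTop)
    (ha' : Filter.Tendsto (fun θ => a θ / θ) Filter.atTop (nhds 0))
    (x : ℝ) (hx : 0 ≤ x) :
    Filter.Tendsto
      (fun θ : ℝ => a θ / θ * Real.log (Fdist α θ (θ / a θ * x + betaShift α θ)))
      Filter.atTop (nhds 0) := by
  obtain ⟨hα0, hα1⟩ := hα
  set Γ := Real.Gamma (1 - α) with hΓdef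
  have hΓ : 0 < Γ := Real.Gamma_pos_of_pos (by linarith)
  have hc : 0 < cAlpha α := div_pos hα0 hΓ
  -- ratio tends to zero
  have hll : Tendsto (fun θ : ℝ => Real.log (Real.log θ) / Real.log θ) atTop (nhds 0) := by
    have h1 : Tendsto (fun y : ℝ => Real.log y / y) atTop (nhds 0) := by
      simpa using Real.isLittleO_log_id_atTop.tendsto_div_nhds_zero
    exact h1.comp Real.tendsto_log_atTop
  have hratio : Tendsto
      (fun θ : ℝ => ((α + 1) * Real.log (Real.log θ) + Real.log Γ) / Real.log θ)
      atTop (nhds 0) := by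
    have h2 : Tendsto (fun θ : ℝ => (Real.log θ)⁻¹) atTop (nhds 0) :=
      Real.tendsto_log_atTop.inv_tendsto_atTop
    have := (hll.const_mul (α + 1)).add (h2.const_mul (Real.log Γ))
    simp only [mul_zero, add_zero] at this
    refine this.congr fun θ => ?_
    field_simp
  have hev1 : ∀ᶠ θ : ℝ in atTop,
      ((α + 1) * Real.log (Real.log θ) + Real.log Γ) / Real.log θ < 1 / 2 :=
    hratio.eventually_lt_const (by norm_num)
  have hev2 : ∀ᶠ θ : ℝ in atTop, (2 : ℝ) ≤ Real.log θ :=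
    Real.tendsto_log_atTop.eventually_ge_atTop 2
  have hev3 : ∀ᶠ θ : ℝ in atTop, (0 : ℝ) < θ := eventually_gt_atTop 0
  -- main bound
  have hbound : ∀ᶠ θ : ℝ in atTop,
      ‖a θ / θ * Real.log (Fdist α θ (θ / a θ * x + betaShift α θ))‖ ≤
        (2 : ℝ) ^ (1 + α) * (a θ / θ) := by
    filter_upwards [hev1, hev2, hev3] with θ h1 h2 h0
    have ha0 : 0 < a θ := hapos θ h0
    set lt := Real.log θ with hltdef
    have hlt : 0 < lt := by linarith
    have hβ : (1 / 2) * lt ≤ betaShift α θ := by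
      have := (div_lt_iff₀ hlt).mp h1
      unfold betaShift
      rw [← hΓdef, ← hltdef]
      linarith
    have hβ1 : (1 : ℝ) ≤ betaShift α θ := by nlinarith
    set s := θ / a θ * x + betaShift α θ with hsdef
    have hxs : 0 ≤ θ / a θ * x := mul_nonneg (div_nonneg h0.le ha0.le) hx
    have hs1 : (1 : ℝ) ≤ s := by simp only [hsdef]; linarith
    have hs0 : 0 < s := lt_of_lt_of_le one_pos hs1
    have hβs : betaShift α θ ≤ s := by simp only [hsdef]; linarith
    set I := ∫ z in Set.Ioi (1:ℝ), z ^ (-(1 + α)) * Real.exp (-(s * z)) with hIdef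
    have hI0 : 0 ≤ I := by
      refine setIntegral_nonneg measurableSet_Ioi fun z hz => ?_
      exact mul_nonneg (Real.rpow_nonneg (by linarith [mem_Ioi.mp hz]) _) (Real.exp_pos _).le
    have hIexp : IntegrableOn (fun z : ℝ => Real.exp (-(s * z))) (Set.Ioi (1:ℝ)) := by
      simpa [neg_mul] using exp_neg_integrableOn_Ioi 1 hs0
    have hmeas : AEStronglyMeasurable
        (fun z : ℝ => z ^ (-(1 + α)) * Real.exp (-(s * z)))
        (volume.restrict (Set.Ioi (1:ℝ))) := by
      refine ContinuousOn.aestronglyMeasurable ?_ measurableSet_Ioi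
      refine ContinuousOn.mul ?_ (Continuous.continuousOn (by continuity))
      exact continuousOn_id.rpow_const fun z hz =>
        Or.inl (ne_of_gt (lt_trans one_pos (mem_Ioi.mp hz)))
    have hrp1 : ∀ z ∈ Set.Ioi (1:ℝ), z ^ (-(1 + α)) ≤ 1 := fun z hz =>
      Real.rpow_le_one_of_one_le_of_nonpos (mem_Ioi.mp hz).le (by linarith)
    have hg : IntegrableOn (fun z : ℝ => z ^ (-(1 + α)) * Real.exp (-(s * z)))
        (Set.Ioi (1:ℝ)) := by
      refine hIexp.mono' hmeas ?_
      rw [ae_restrict_iff' measurableSet_Ioi]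
      filter_upwards with z hz
      have h1z : (1:ℝ) < z := mem_Ioi.mp hz
      rw [Real.norm_eq_abs, abs_of_nonneg
        (mul_nonneg (Real.rpow_nonneg (by linarith) _) (Real.exp_pos _).le)]
      exact mul_le_of_le_one_left (Real.exp_pos _).le (hrp1 z hz)
    have hIle : I ≤ Real.exp (-s) / s := by
      have hle : I ≤ ∫ z in Set.Ioi (1:ℝ), Real.exp (-(s * z)) := by
        refine setIntegral_mono_on hg hIexp measurableSet_Ioi fun z hz => ?_
        exact mul_le_of_le_one_left (Real.exp_pos _).le (hrp1 z hz)
      have hval := integral_comp_mul_left_Ioi (fun u : ℝ => Real.exp (-u)) 1 hs0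
      simp only [smul_eq_mul, mul_one, integral_exp_neg_Ioi] at hval
      rw [hval] at hle
      calc I ≤ s⁻¹ * Real.exp (-s) := hle
        _ = Real.exp (-s) / s := by ring
    set ε := cAlpha α * s ^ (-α) * I with hεdef
    have hε0 : 0 ≤ ε :=
      mul_nonneg (mul_nonneg hc.le (Real.rpow_nonneg hs0.le _)) hI0
    -- key upper bound on ε
    have hss : s ^ (-α) * s⁻¹ = s ^ (-(1 + α)) := by
      rw [← Real.rpow_neg_one s, ← Real.rpow_add hs0]
      norm_num
    have hexpβ : Real.exp (-betaShift α θ) = θ⁻¹ * (lt ^ (α + 1) * Γ) := by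
      unfold betaShift
      rw [← hΓdef, ← hltdef,
        show -(lt - (α + 1) * Real.log lt - Real.log Γ)
          = -lt + ((α + 1) * Real.log lt + Real.log Γ) by ring,
        Real.exp_add, Real.exp_add, hltdef, Real.exp_neg, Real.exp_log h0,
        Real.exp_log hΓ, Real.rpow_def_of_pos hlt, mul_comm (Real.log lt)]
    have hmono : s ^ (-(1 + α)) ≤ ((1 / 2) * lt) ^ (-(1 + α)) :=
      Real.rpow_le_rpow_of_nonpos (by linarith) (le_trans hβ hβs) (by linarith)
    have hhalf : ((1 / 2 : ℝ) * lt) ^ (-(1 + α))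
        = (2 : ℝ) ^ (1 + α) * lt ^ (-(1 + α)) := by
      rw [Real.mul_rpow (by norm_num) hlt.le]
      congr 1
      rw [one_div, Real.inv_rpow (by norm_num : (0:ℝ) ≤ 2), ← Real.rpow_neg (by norm_num)]
      norm_num
    have hltcancel : lt ^ (-(1 + α)) * lt ^ (α + 1) = 1 := by
      rw [← Real.rpow_add hlt, show -(1 + α) + (α + 1) = 0 by ring, Real.rpow_zero]
    have hεle : ε ≤ α * (2 : ℝ) ^ (1 + α) / θ := by
      have step1 : ε ≤ cAlpha α * s ^ (-α) * (Real.exp (-s) / s) := by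
        exact mul_le_mul_of_nonneg_left hIle
          (mul_nonneg hc.le (Real.rpow_nonneg hs0.le _))
      have step2 : cAlpha α * s ^ (-α) * (Real.exp (-s) / s)
          = cAlpha α * s ^ (-(1 + α)) * Real.exp (-s) := by
        rw [← hss]; ring
      have step3 : Real.exp (-s) ≤ Real.exp (-betaShift α θ) :=
        Real.exp_le_exp.mpr (by linarith)
      have step4 : cAlpha α * s ^ (-(1 + α)) * Real.exp (-s)
          ≤ cAlpha α * ((2 : ℝ) ^ (1 + α) * lt ^ (-(1 + α)))
            * (θ⁻¹ * (lt ^ (α + 1) * Γ)) := by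
        rw [← hexpβ, ← hhalf]
        have hsp : (0:ℝ) ≤ s ^ (-(1 + α)) := Real.rpow_nonneg hs0.le _
        have hep : (0:ℝ) ≤ Real.exp (-s) := (Real.exp_pos _).le
        have hbp : (0:ℝ) ≤ ((1/2:ℝ) * lt) ^ (-(1 + α)) := Real.rpow_nonneg (by linarith) _
        have := mul_le_mul (mul_le_mul_of_nonneg_left hmono hc.le) step3 hep
          (mul_nonneg hc.le hbp)
        exact this
      have step5 : cAlpha α * ((2 : ℝ) ^ (1 + α) * lt ^ (-(1 + α)))
            * (θ⁻¹ * (lt ^ (α + 1) * Γ)) = α * (2 : ℝ) ^ (1 + α) / θ := by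
        have hcg : cAlpha α * Γ = α := by
          unfold cAlpha
          rw [← hΓdef]
          field_simp
        calc cAlpha α * ((2 : ℝ) ^ (1 + α) * lt ^ (-(1 + α)))
              * (θ⁻¹ * (lt ^ (α + 1) * Γ))
            = (cAlpha α * Γ) * (2 : ℝ) ^ (1 + α) * θ⁻¹
              * (lt ^ (-(1 + α)) * lt ^ (α + 1)) := by ring
          _ = α * (2 : ℝ) ^ (1 + α) / θ := by
              rw [hcg, hltcancel]; ring
      linarith [le_trans step1 (le_of_eq step2), le_trans step4 (le_of_eq step5)]
    -- rewrite the function value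
    have h1ε : (0:ℝ) < 1 + ε := by linarith
    have hF : Fdist α θ s = (1 + ε) ^ (-(θ / α)) := by
      rw [Fdist, if_pos hs0]
    have hlogF : Real.log (Fdist α θ s) = -(θ / α) * Real.log (1 + ε) := by
      rw [hF, Real.log_rpow h1ε]
    have hval : a θ / θ * Real.log (Fdist α θ s)
        = -(a θ / α * Real.log (1 + ε)) := by
      rw [hlogF]
      field_simp
    have hlog0 : 0 ≤ Real.log (1 + ε) := Real.log_nonneg (by linarith)
    have hlogle : Real.log (1 + ε) ≤ ε := by
      have := Real.log_le_sub_one_of_pos h1ε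
      linarith
    rw [hval, norm_neg, Real.norm_eq_abs,
      abs_of_nonneg (mul_nonneg (div_nonneg ha0.le hα0.le) hlog0)]
    calc a θ / α * Real.log (1 + ε) ≤ a θ / α * (α * (2 : ℝ) ^ (1 + α) / θ) := by
          refine mul_le_mul_of_nonneg_left (le_trans hlogle hεle)
            (div_nonneg ha0.le hα0.le)
      _ = (2 : ℝ) ^ (1 + α) * (a θ / θ) := by
          field_simp
  have hg0 : Tendsto (fun θ : ℝ => (2 : ℝ) ^ (1 + α) * (a θ / θ)) atTop (nhds 0) := by
    simpa using ha'.const_mul ((2 : ℝ) ^ (1 + α))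
  exact squeeze_zero_norm' hbound hg0
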